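/- Let (X, Y) be the random point in ℝ² taking values (cx, κcx), (−cx, −κcx), (κcy, cy), (−κcy, −cy) with probabilities p/2, p/2, q/2, q/2 respectively, where x ≠ 0, y ≠ 0, κ ∈ ℝ, c := √((x⁻² + y⁻²)/(κ²+1)), p := y²/(x²+y²), q := 1−p. Then E X = E Y = 0, E X² = E Y² = 1, and with ρ := E XY one has XY = (ρ/2)(X² + Y²) almost surely. -/

import Mathlib

open MeasureTheory

lemma integrable_dirac'' {α E : Type*} [MeasurableSpace α] [NormedAddCommGroup E]
    {f : α → E} (hf : StronglyMeasurable f) (a : α) :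
    Integrable f (Measure.dirac a) := by
  refine ⟨hf.aestronglyMeasurable, ?_⟩
  rw [HasFiniteIntegral, lintegral_dirac' a hf.enorm]
  exact ENNReal.coe_lt_top

lemma integral_four (p2 q2 : ℝ) (hp2 : 0 ≤ p2) (hq2 : 0 ≤ q2)
    (a1 a2 a3 a4 : ℝ × ℝ) (f : ℝ × ℝ → ℝ) (hf : Measurable f) :
    ∫ z, f z ∂(ENNReal.ofReal p2 • Measure.dirac a1 + ENNReal.ofReal p2 • Measure.dirac a2
      + ENNReal.ofReal q2 • Measure.dirac a3 + ENNReal.ofReal q2 • Measure.dirac a4)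
      = p2 * f a1 + p2 * f a2 + q2 * f a3 + q2 * f a4 := by
  have hi : ∀ a : ℝ × ℝ, Integrable f (Measure.dirac a) :=
    fun a => integrable_dirac'' hf.stronglyMeasurable a
  have hs : ∀ (r : ℝ) (a : ℝ × ℝ), Integrable f (ENNReal.ofReal r • Measure.dirac a) :=
    fun r a => (hi a).smul_measure ENNReal.ofReal_ne_top
  rw [integral_add_measure (((hs _ a1).add_measure (hs _ a2)).add_measure (hs _ a3)) (hs _ a4),
    integral_add_measure ((hs _ a1).add_measure (hs _ a2)) (hs _ a3),
    integral_add_measure (hs _ a1) (hs _ a2)]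
  simp only [integral_smul_measure, integral_dirac, smul_eq_mul,
    ENNReal.toReal_ofReal hp2, ENNReal.toReal_ofReal hq2]

lemma ae_four (p2 q2 : ENNReal) (a1 a2 a3 a4 : ℝ × ℝ) {S : Set (ℝ × ℝ)} (hS : MeasurableSet S)
    (h1 : a1 ∈ S) (h2 : a2 ∈ S) (h3 : a3 ∈ S) (h4 : a4 ∈ S) :
    ∀ᵐ z ∂(p2 • Measure.dirac a1 + p2 • Measure.dirac a2
      + q2 • Measure.dirac a3 + q2 • Measure.dirac a4), z ∈ S := by
  rw [ae_iff]
  have hc : MeasurableSet Sᶜ := hS.compl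
  have : ∀ a : ℝ × ℝ, a ∈ S → Measure.dirac a {z | ¬ z ∈ S} = 0 := by
    intro a ha
    have : {z : ℝ × ℝ | ¬ z ∈ S} = Sᶜ := rfl
    rw [this, Measure.dirac_apply' _ hc, Set.indicator_of_notMem (by simpa using ha)]
  simp [Measure.add_apply, Measure.smul_apply, this _ h1, this _ h2, this _ h3, this _ h4]

/-- The explicit four-point distribution on which Pearson's asymptotic variance
degenerates: `(X,Y)` takes values `(cx, κcx), (−cx, −κcx), (κcy, cy), (−κcy, −cy)`
with probabilities `p/2, p/2, q/2, q/2`; then `X, Y` are standardized and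
`XY = (ρ/2)(X²+Y²)` a.s., where `ρ = E XY`. -/
theorem stmt17 {Ω : Type*} [MeasurableSpace Ω] (μ : Measure Ω) [IsProbabilityMeasure μ]
    (X Y : Ω → ℝ) (hX : Measurable X) (hY : Measurable Y)
    (x y κ : ℝ) (hx : x ≠ 0) (hy : y ≠ 0)
    (c p q : ℝ)
    (hc : c = Real.sqrt ((x⁻¹ ^ 2 + y⁻¹ ^ 2) / (κ ^ 2 + 1)))
    (hp : p = y ^ 2 / (x ^ 2 + y ^ 2)) (hq : q = 1 - p)
    (hlaw : Measure.map (fun ω => (X ω, Y ω)) μ =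
        ENNReal.ofReal (p / 2) • Measure.dirac (c * x, κ * c * x)
      + ENNReal.ofReal (p / 2) • Measure.dirac (-(c * x), -(κ * c * x))
      + ENNReal.ofReal (q / 2) • Measure.dirac (κ * c * y, c * y)
      + ENNReal.ofReal (q / 2) • Measure.dirac (-(κ * c * y), -(c * y))) :
    (∫ ω, X ω ∂μ = 0) ∧ (∫ ω, Y ω ∂μ = 0) ∧
    (∫ ω, X ω ^ 2 ∂μ = 1) ∧ (∫ ω, Y ω ^ 2 ∂μ = 1) ∧
    (∀ᵐ ω ∂μ, X ω * Y ω = ((∫ ω', X ω' * Y ω' ∂μ) / 2) * (X ω ^ 2 + Y ω ^ 2)) := by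
  have hκ1 : κ ^ 2 + 1 ≠ 0 := by positivity
  have hxy : x ^ 2 + y ^ 2 ≠ 0 := by positivity
  have hc2 : c ^ 2 = (x⁻¹ ^ 2 + y⁻¹ ^ 2) / (κ ^ 2 + 1) := by
    rw [hc, Real.sq_sqrt (by positivity)]
  have hp2 : (0:ℝ) ≤ p / 2 := by
    rw [hp]; positivity
  have hq2 : (0:ℝ) ≤ q / 2 := by
    rw [hq, hp]
    have : y ^ 2 / (x ^ 2 + y ^ 2) ≤ 1 := by
      rw [div_le_one (by positivity)]; nlinarith [sq_nonneg x]
    linarith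
  have hpm : AEMeasurable (fun ω => (X ω, Y ω)) μ := (hX.prodMk hY).aemeasurable
  have hint : ∀ f : ℝ × ℝ → ℝ, Measurable f →
      ∫ ω, f (X ω, Y ω) ∂μ = p / 2 * f (c * x, κ * c * x) + p / 2 * f (-(c * x), -(κ * c * x))
        + q / 2 * f (κ * c * y, c * y) + q / 2 * f (-(κ * c * y), -(c * y)) := by
    intro f hf
    rw [← integral_map hpm hf.aestronglyMeasurable, hlaw,
      integral_four _ _ hp2 hq2 _ _ _ _ f hf]
  have hEX : ∫ ω, X ω ∂μ = 0 := by
    have := hint (fun z => z.1) measurable_fst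
    simp only at this
    rw [this]; ring
  have hEY : ∫ ω, Y ω ∂μ = 0 := by
    have := hint (fun z => z.2) measurable_snd
    simp only at this
    rw [this]; ring
  have hcc : c ^ 2 * (κ ^ 2 + 1) = x⁻¹ ^ 2 + y⁻¹ ^ 2 := by
    rw [hc2]; field_simp
  have hkey : c ^ 2 * x ^ 2 * y ^ 2 * (κ ^ 2 + 1) = x ^ 2 + y ^ 2 := by
    have : c ^ 2 * x ^ 2 * y ^ 2 * (κ ^ 2 + 1) = (x⁻¹ ^ 2 + y⁻¹ ^ 2) * (x ^ 2 * y ^ 2) := by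
      rw [← hcc]; ring
    rw [this]; field_simp; ring
  have hEX2 : ∫ ω, X ω ^ 2 ∂μ = 1 := by
    have := hint (fun z => z.1 ^ 2) (measurable_fst.pow_const 2)
    simp only at this
    rw [this, hq, hp, eq_comm]
    field_simp
    linear_combination (-2) * hkey
  have hEY2 : ∫ ω, Y ω ^ 2 ∂μ = 1 := by
    have := hint (fun z => z.2 ^ 2) (measurable_snd.pow_const 2)
    simp only at this
    rw [this, hq, hp, eq_comm]
    field_simp
    linear_combination (-2) * hkey
  have hρ : ∫ ω, X ω * Y ω ∂μ = 2 * κ / (κ ^ 2 + 1) := by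
    have := hint (fun z => z.1 * z.2) (measurable_fst.mul measurable_snd)
    simp only at this
    rw [this, hq, hp, eq_comm]
    field_simp
    linear_combination (-4 * κ) * hkey
  refine ⟨hEX, hEY, hEX2, hEY2, ?_⟩
  rw [hρ]
  set r : ℝ := 2 * κ / (κ ^ 2 + 1) / 2 with hr
  have hrκ : r = κ / (κ ^ 2 + 1) := by rw [hr]; ring
  set S : Set (ℝ × ℝ) := {z | z.1 * z.2 = r * (z.1 ^ 2 + z.2 ^ 2)} with hS
  have hSm : MeasurableSet S := by
    apply measurableSet_eq_fun
    · exact measurable_fst.mul measurable_snd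
    · exact measurable_const.mul ((measurable_fst.pow_const 2).add (measurable_snd.pow_const 2))
  have key : ∀ᵐ z ∂(Measure.map (fun ω => (X ω, Y ω)) μ), z ∈ S := by
    rw [hlaw]
    apply ae_four _ _ _ _ _ _ hSm
    · show c * x * (κ * c * x) = r * ((c * x) ^ 2 + (κ * c * x) ^ 2)
      rw [hrκ]; field_simp; ring
    · show -(c * x) * -(κ * c * x) = r * ((-(c * x)) ^ 2 + (-(κ * c * x)) ^ 2)
      rw [hrκ]; field_simp; ring
    · show κ * c * y * (c * y) = r * ((κ * c * y) ^ 2 + (c * y) ^ 2)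
      rw [hrκ]; field_simp
    · show -(κ * c * y) * -(c * y) = r * ((-(κ * c * y)) ^ 2 + (-(c * y)) ^ 2)
      rw [hrκ]; field_simp
  have := (ae_map_iff hpm hSm).mp key
  filter_upwards [this] with ω hω
  exact hω
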